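/- Let k \ge 2 be an integer, z \in \mathbb{C} \setminus \mathbb{Z}, and 0 < t < 1. Then \sum_{n \in \mathbb{Z}} e^{2\pi i n t}/(2\pi i (n+z))^k = e^{-2\pi i z t} \cdot \mathrm{Res}_{u=0} \frac{e^{tu}}{u^k (1 - e^{-2\pi i z + u})} du, i.e. equals e^{-2\pi i z t} times the coefficient of u^{k-1} in the Taylor expansion at u = 0 of e^{tu}/(1 - e^{-2\pi i z + u}). -/

import Mathlib

open Complex

noncomputable section ABSauxSection
open Complex Metric MeasureTheory intervalIntegral Set Filter
namespace ABSaux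

lemma iteratedDeriv_cmul (n : ℕ) (c : ℂ) (f : ℂ → ℂ) :
    iteratedDeriv n (fun y => c * f y) = fun x => c * iteratedDeriv n f x := by
  induction n generalizing f with
  | zero => simp [iteratedDeriv_zero]
  | succ n ih =>
    rw [iteratedDeriv_succ', iteratedDeriv_succ']
    rw [show (deriv fun y => c * f y) = fun x => c * deriv f x from funext fun x => deriv_const_mul_field c]
    exact ih (deriv f)

lemma coeff_eq {f : ℂ → ℂ} {r : NNReal} (hr : 0 < r)
    (hd : DifferentiableOn ℂ f (closedBall (0:ℂ) r)) (n : ℕ) :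
    iteratedDeriv n f 0 / (n.factorial : ℂ) =
      (2 * ↑Real.pi * I : ℂ)⁻¹ • ∮ u in C(0, (r:ℝ)), u⁻¹ ^ n • u⁻¹ • f u := by
  have h := hd.hasFPowerSeriesOnBall hr
  have h2 := h.factorial_smul (1:ℂ) n
  rw [iteratedDeriv_eq_iteratedFDeriv, ← h2]
  have h3 : (cauchyPowerSeries f 0 (r:ℝ) n fun _ => (1:ℂ)) =
      (2 * ↑Real.pi * I : ℂ)⁻¹ • ∮ u in C(0, (r:ℝ)), u⁻¹ ^ n • u⁻¹ • f u := by
    simp [cauchyPowerSeries, ContinuousMultilinearMap.mkPiRing_apply]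
  rw [h3, nsmul_eq_mul, mul_div_cancel_left₀]
  exact_mod_cast Nat.factorial_ne_zero n

lemma itder_phi (w : ℂ) : ∀ (m : ℕ) (u : ℂ), w + u ≠ 0 →
    iteratedDeriv m (fun v => -(w + v)⁻¹) u
      = -((-1)^m * (m.factorial : ℂ) * ((w+u)⁻¹)^(m+1)) := by
  intro m
  induction m with
  | zero => intro u hu; simp [iteratedDeriv_zero]
  | succ m ih =>
    intro u hu
    rw [iteratedDeriv_succ]
    have hopen : IsOpen {v : ℂ | w + v ≠ 0} :=
      isOpen_compl_singleton.preimage (continuous_const.add continuous_id)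
    have hEq : iteratedDeriv m (fun v => -(w+v)⁻¹)
        =ᶠ[nhds u] fun v => -((-1)^m * (m.factorial : ℂ) * ((w+v)⁻¹)^(m+1)) :=
      eventuallyEq_of_mem (hopen.mem_nhds hu) (fun v hv => ih v hv)
    rw [hEq.deriv_eq]
    have h1 : HasDerivAt (fun v : ℂ => w + v) 1 u := (hasDerivAt_id u).const_add w
    have h2 : HasDerivAt (fun v : ℂ => (w+v)⁻¹) (-1/(w+u)^2) u := h1.inv hu
    have h3 := h2.pow (m+1)
    have h4 := (h3.const_mul ((-1)^m * (m.factorial : ℂ))).neg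
    rw [show deriv (fun v : ℂ => -((-1)^m * (m.factorial : ℂ) * ((w+v)⁻¹)^(m+1))) u = _ from h4.deriv]
    rw [Nat.factorial_succ]
    push_cast
    field_simp
    have hu2 : (w+u)^2 * ((w+u)⁻¹)^2 = 1 := by rw [← mul_pow, mul_inv_cancel₀ hu, one_pow]
    linear_combination (-((m.factorial:ℂ) * ((w + u)⁻¹) ^ m * (-1) ^ m)) * hu2

lemma swap_lemma {f : ℝ → ℝ → ℂ} (hf : Continuous (fun p : ℝ × ℝ => f p.1 p.2))
    {b d : ℝ} (hb : 0 ≤ b) (hd : 0 ≤ d) :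
    ∫ x in (0:ℝ)..b, ∫ θ in (0:ℝ)..d, f x θ = ∫ θ in (0:ℝ)..d, ∫ x in (0:ℝ)..b, f x θ := by
  rw [intervalIntegral.integral_of_le hb, intervalIntegral.integral_of_le hd]
  simp_rw [intervalIntegral.integral_of_le hb, intervalIntegral.integral_of_le hd]
  have hint : Integrable (Function.uncurry f)
      ((volume.restrict (Ioc 0 b)).prod (volume.restrict (Ioc 0 d))) := by
    rw [Measure.prod_restrict]
    have h1 : IntegrableOn (Function.uncurry f) (Icc 0 b ×ˢ Icc 0 d) (volume.prod volume) :=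
      hf.continuousOn.integrableOn_compact (isCompact_Icc.prod isCompact_Icc)
    exact h1.mono_set (prod_mono Ioc_subset_Icc_self Ioc_subset_Icc_self)
  exact MeasureTheory.integral_integral_swap hint

lemma key (k : ℕ) (hk : 2 ≤ k) (q w : ℂ) (hq : 1 - q ≠ 0) (hw : w ≠ 0)
    (hexp : Complex.exp w = q) (ρ : NNReal) (hρ : 0 < ρ) (hρw : (ρ:ℝ) < ‖w‖)
    (hball : ∀ u : ℂ, u ∈ closedBall (0:ℂ) ρ → 1 - q * Complex.exp u ≠ 0) :
    (∫ x in (0:ℝ)..1, Complex.exp (w * x) *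
      (iteratedDeriv (k-1) (fun u => Complex.exp (x*u) * (1 - q * Complex.exp u)⁻¹) 0
        / ((k-1).factorial : ℂ)))
    = 1 / (-w)^k := by
  have hρ0 : (ρ:ℝ) ≠ 0 := by positivity
  have hmem : ∀ θ : ℝ, circleMap 0 (ρ:ℝ) θ ∈ closedBall (0:ℂ) (ρ:ℝ) := by
    intro θ
    simp [Metric.mem_closedBall, Complex.dist_eq, norm_circleMap_zero]
  have hγ0 : ∀ θ : ℝ, circleMap 0 (ρ:ℝ) θ ≠ 0 := fun θ => circleMap_ne_center hρ0
  have hwv : ∀ v : ℂ, v ∈ closedBall (0:ℂ) (ρ:ℝ) → w + v ≠ 0 := by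
    intro v hv heq
    have hv' : ‖v‖ ≤ (ρ:ℝ) := by
      simpa [Metric.mem_closedBall, Complex.dist_eq] using hv
    have : v = -w := by linear_combination heq
    rw [this] at hv'
    simp only [norm_neg] at hv'
    linarith
  have hdiff : DifferentiableOn ℂ (fun u => (1 - q * Complex.exp u)⁻¹)
      (closedBall (0:ℂ) (ρ:ℝ)) :=
    (((differentiable_const (1:ℂ)).sub ((differentiable_const q).mul
      Complex.differentiable_exp)).differentiableOn).inv hball
  have gdiff : ∀ x : ℝ, DifferentiableOn ℂ
      (fun u => Complex.exp (x*u) * (1 - q * Complex.exp u)⁻¹) (closedBall (0:ℂ) (ρ:ℝ)) :=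
    fun x => (((differentiable_const ((x:ℂ))).mul differentiable_id).cexp.differentiableOn).mul hdiff
  have rep : ∀ x : ℝ, iteratedDeriv (k-1)
      (fun u => Complex.exp (x*u) * (1 - q * Complex.exp u)⁻¹) 0 / ((k-1).factorial : ℂ)
      = (2 * ↑Real.pi * I : ℂ)⁻¹ •
        ∮ u in C(0, (ρ:ℝ)), u⁻¹ ^ (k-1) • u⁻¹ • (Complex.exp (x*u) * (1 - q * Complex.exp u)⁻¹) :=
    fun x => coeff_eq hρ (gdiff x) (k-1)
  set Ψ : ℝ → ℝ → ℂ := fun x θ => Complex.exp (w * x) *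
    (circleMap 0 (ρ:ℝ) θ * I * ((circleMap 0 (ρ:ℝ) θ)⁻¹ ^ (k-1) * ((circleMap 0 (ρ:ℝ) θ)⁻¹ *
      (Complex.exp (x * circleMap 0 (ρ:ℝ) θ) * (1 - q * Complex.exp (circleMap 0 (ρ:ℝ) θ))⁻¹))))
    with hΨ
  have e1 : ∀ x : ℝ, Complex.exp (w * x) *
      (iteratedDeriv (k-1) (fun u => Complex.exp (x*u) * (1 - q * Complex.exp u)⁻¹) 0
        / ((k-1).factorial : ℂ))
      = (2 * ↑Real.pi * I : ℂ)⁻¹ * ∫ θ in (0:ℝ)..(2*Real.pi), Ψ x θ := by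
    intro x
    rw [rep x]
    unfold circleIntegral
    simp only [deriv_circleMap, smul_eq_mul]
    rw [mul_left_comm, ← intervalIntegral.integral_const_mul]
  have hΨc : Continuous (fun p : ℝ × ℝ => Ψ p.1 p.2) := by
    have hγ : Continuous fun p : ℝ×ℝ => circleMap 0 (ρ:ℝ) p.2 :=
      (continuous_circleMap 0 (ρ:ℝ)).comp continuous_snd
    have h1 : Continuous fun p : ℝ×ℝ => Complex.exp (w * ↑p.1) :=
      (continuous_const.mul (Complex.continuous_ofReal.comp continuous_fst)).cexp
    have h2 : Continuous fun p : ℝ×ℝ => (circleMap 0 (ρ:ℝ) p.2)⁻¹ :=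
      hγ.inv₀ (fun p => hγ0 p.2)
    have h3 : Continuous fun p : ℝ×ℝ => Complex.exp (↑p.1 * circleMap 0 (ρ:ℝ) p.2) :=
      ((Complex.continuous_ofReal.comp continuous_fst).mul hγ).cexp
    have h4 : Continuous fun p : ℝ×ℝ => (1 - q * Complex.exp (circleMap 0 (ρ:ℝ) p.2))⁻¹ :=
      (continuous_const.sub (continuous_const.mul hγ.cexp)).inv₀ (fun p => hball _ (hmem p.2))
    exact h1.mul ((hγ.mul continuous_const).mul ((h2.pow (k-1)).mul (h2.mul (h3.mul h4))))
  have inner : ∀ θ : ℝ, (∫ x in (0:ℝ)..1, Ψ x θ)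
      = circleMap 0 (ρ:ℝ) θ * I * ((circleMap 0 (ρ:ℝ) θ)⁻¹ ^ (k-1) *
          ((circleMap 0 (ρ:ℝ) θ)⁻¹ * (-(w + circleMap 0 (ρ:ℝ) θ)⁻¹))) := by
    intro θ
    set u : ℂ := circleMap 0 (ρ:ℝ) θ with hu
    have hu0 : u ≠ 0 := hγ0 θ
    have hD : 1 - q * Complex.exp u ≠ 0 := hball u (hmem θ)
    have hwu : w + u ≠ 0 := hwv u (hmem θ)
    set K : ℂ := u * I * (u⁻¹ ^ (k-1) * (u⁻¹ * (1 - q * Complex.exp u)⁻¹)) with hK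
    have ept : ∀ x : ℝ, Ψ x θ = K * Complex.exp ((w+u) * x) := by
      intro x
      rw [hΨ, hK]
      rw [show (w+u)*(x:ℂ) = w*x + x*u by ring, Complex.exp_add]
      ring
    rw [intervalIntegral.integral_congr (fun x _ => ept x)]
    rw [intervalIntegral.integral_const_mul, integral_exp_mul_complex hwu]
    rw [hK]
    have hqe : Complex.exp (w + u) = q * Complex.exp u := by
      rw [Complex.exp_add, hexp]
    simp only [Complex.ofReal_one, Complex.ofReal_zero, mul_one, mul_zero, Complex.exp_zero, hqe]
    field_simp
    ring
  rw [intervalIntegral.integral_congr (fun x _ => e1 x)]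
  rw [intervalIntegral.integral_const_mul]
  rw [swap_lemma hΨc zero_le_one (by positivity)]
  rw [intervalIntegral.integral_congr (fun θ _ => inner θ)]
  have phidiff : DifferentiableOn ℂ (fun v => -(w + v)⁻¹) (closedBall (0:ℂ) (ρ:ℝ)) :=
    ((((differentiable_const w).add differentiable_id).differentiableOn).inv hwv).neg
  have reassemble : (∮ u in C(0, (ρ:ℝ)), u⁻¹ ^ (k-1) • u⁻¹ • (-(w + u)⁻¹))
      = ∫ θ in (0:ℝ)..(2*Real.pi), circleMap 0 (ρ:ℝ) θ * I * ((circleMap 0 (ρ:ℝ) θ)⁻¹ ^ (k-1) *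
          ((circleMap 0 (ρ:ℝ) θ)⁻¹ * (-(w + circleMap 0 (ρ:ℝ) θ)⁻¹))) := by
    unfold circleIntegral
    simp only [deriv_circleMap, smul_eq_mul]
  rw [← reassemble, ← smul_eq_mul, ← coeff_eq hρ phidiff (k-1)]
  rw [itder_phi w (k-1) 0 (by simpa using hw)]
  obtain ⟨m, rfl⟩ : ∃ m, k = m + 2 := ⟨k-2, by omega⟩
  have hfac : (((m+2-1).factorial : ℂ)) ≠ 0 := by
    exact_mod_cast Nat.factorial_ne_zero _
  rw [div_eq_iff hfac]
  simp only [add_zero, show m+2-1 = m+1 from rfl]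
  rw [show (-w)^(m+2) = (-1)^(m+2) * w^(m+2) by ring]
  field_simp
  have hsq : ((-1:ℂ)) ^ (m*2) = 1 := Even.neg_one_pow ⟨m, by ring⟩
  have hsq2 : ((-1:ℂ)^m)^2 = 1 := by rw [← pow_mul]; exact hsq
  ring_nf
  simp [hsq, hsq2]
  field_simp
lemma sum_aux (k : ℕ) (hk : 2 ≤ k) (z : ℂ) :
    Summable (fun n : ℤ => 1 / (2*(Real.pi:ℂ)*I*((n:ℂ)+z))^k) := by
  set g : ℤ → ℝ := fun n => (2*Real.pi)⁻¹^k * (1/|((n:ℝ)) + z.re|^(k:ℝ)) with hg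
  have hgs : Summable g := by
    apply Summable.mul_left
    exact (Real.summable_one_div_int_add_rpow z.re k).mpr (by exact_mod_cast lt_of_lt_of_le one_lt_two hk)
  apply Summable.of_norm_bounded_eventually hgs
  have hfin : {n : ℤ | |(n:ℝ) + z.re| < 1}.Finite := by
    apply Set.Finite.subset (Finset.finite_toSet (Finset.Icc ⌈-1 - z.re⌉ ⌊1 - z.re⌋))
    intro n hn
    simp only [mem_setOf_eq, abs_lt] at hn
    simp only [Finset.coe_Icc, mem_Icc]
    constructor
    · rw [Int.ceil_le]; push_cast; linarith [hn.1]
    · rw [Int.le_floor]; push_cast; linarith [hn.2]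
  rw [Filter.eventually_cofinite]
  apply Set.Finite.subset hfin
  intro n hn
  simp only [mem_setOf_eq] at hn ⊢
  by_contra hlt
  push_neg at hlt
  apply hn
  have hb : (0:ℝ) < |(n:ℝ) + z.re| := lt_of_lt_of_le one_pos hlt
  have hab : |(n:ℝ) + z.re| ≤ ‖(n:ℂ)+z‖ := by
    have := Complex.abs_re_le_norm ((n:ℂ)+z)
    simpa [Complex.add_re] using this
  have habs : ‖(2*(Real.pi:ℂ)*I*((n:ℂ)+z))‖ = 2*Real.pi * ‖(n:ℂ)+z‖ := by
    simp [norm_mul, Complex.norm_real, abs_of_pos Real.pi_pos]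
  have : ‖1 / (2*(Real.pi:ℂ)*I*((n:ℂ)+z))^k‖
      = 1 / ((2*Real.pi)^k * ‖(n:ℂ)+z‖^k) := by
    rw [norm_div, norm_one, norm_pow, habs, mul_pow]
  rw [this, hg]
  simp only []
  rw [show |(n:ℝ) + z.re| ^ ((k:ℕ):ℝ) = |(n:ℝ) + z.re| ^ (k:ℕ) from Real.rpow_natCast _ k]
  rw [inv_pow, ← one_div, div_mul_div_comm, one_mul]
  gcongr

end ABSaux
end ABSauxSection

open ABSaux Complex Metric MeasureTheory intervalIntegral Set Filter in
/-- For an integer `k ≥ 2`, `z ∈ ℂ \ ℤ` and `0 < t < 1`,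
`∑_{n∈ℤ} e^{2πint}/(2πi(n+z))^k` equals `e^{-2πizt}` times the coefficient of `u^{k-1}`
in the Taylor expansion at `u = 0` of `e^{tu}/(1 - e^{-2πiz+u})`, i.e.
`e^{-2πizt} · (d/du)^{k-1}|_{u=0} [e^{tu}/(1-e^{-2πiz+u})] / (k-1)!`. -/
theorem affine_bernoulli_series_k
    (k : ℕ) (hk : 2 ≤ k)
    (z : ℂ) (hz : ∀ m : ℤ, z ≠ (m : ℂ))
    (t : ℝ) (h0 : 0 < t) (h1 : t < 1) :
    Summable (fun n : ℤ =>
      Complex.exp (2 * (Real.pi : ℂ) * Complex.I * (n : ℂ) * (t : ℂ)) /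
        (2 * (Real.pi : ℂ) * Complex.I * ((n : ℂ) + z)) ^ k) ∧
    (∑' n : ℤ,
      Complex.exp (2 * (Real.pi : ℂ) * Complex.I * (n : ℂ) * (t : ℂ)) /
        (2 * (Real.pi : ℂ) * Complex.I * ((n : ℂ) + z)) ^ k)
      = Complex.exp (-(2 * (Real.pi : ℂ) * Complex.I) * z * (t : ℂ)) *
          (iteratedDeriv (k - 1)
            (fun u : ℂ => Complex.exp ((t : ℂ) * u) /
              (1 - Complex.exp (-(2 * (Real.pi : ℂ) * Complex.I) * z + u))) 0 /
            (Nat.factorial (k - 1) : ℂ)) := by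
  haveI : Fact ((0:ℝ) < 1) := ⟨one_pos⟩
  set q : ℂ := Complex.exp (-(2 * (Real.pi:ℂ) * I) * z) with hqdef
  have hq1 : 1 - q ≠ 0 := by
    rw [sub_ne_zero]
    intro h
    obtain ⟨m, hm⟩ := Complex.exp_eq_one_iff.mp h.symm
    apply hz (-m)
    push_cast
    have h2πI : (2 * (Real.pi:ℂ) * I) ≠ 0 := Complex.two_pi_I_ne_zero
    have h2 : (-z) * (2 * (Real.pi:ℂ) * I) = (m:ℂ) * (2 * (Real.pi:ℂ) * I) := by
      linear_combination hm
    have h3 := mul_right_cancel₀ h2πI h2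
    linear_combination -h3
  have hcont0 : ContinuousAt (fun u : ℂ => 1 - q * Complex.exp u) 0 :=
    (continuous_const.sub (continuous_const.mul Complex.continuous_exp)).continuousAt
  have hne0 : (fun u : ℂ => 1 - q * Complex.exp u) 0 ≠ 0 := by simpa using hq1
  obtain ⟨ε, hε, hball0⟩ := Metric.eventually_nhds_iff.mp (hcont0.eventually_ne hne0)
  set r : NNReal := Real.toNNReal (ε/2) with hrdef
  have hr : 0 < r := Real.toNNReal_pos.mpr (by linarith)
  have hrε : (r:ℝ) < ε := by
    rw [hrdef, Real.coe_toNNReal _ (by linarith)]; linarith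
  have hball : ∀ u : ℂ, u ∈ closedBall (0:ℂ) r → 1 - q * Complex.exp u ≠ 0 := by
    intro u hu
    exact hball0 (lt_of_le_of_lt (mem_closedBall.mp hu) hrε)
  set c : ℝ → ℂ := fun x => iteratedDeriv (k-1)
      (fun u => Complex.exp (x*u) * (1 - q * Complex.exp u)⁻¹) 0 / ((k-1).factorial : ℂ) with hcdef
  have hdiffh : DifferentiableOn ℂ (fun u => (1 - q * Complex.exp u)⁻¹) (closedBall (0:ℂ) r) :=
    (((differentiable_const (1:ℂ)).sub ((differentiable_const q).mul
      Complex.differentiable_exp)).differentiableOn).inv hball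
  have gdiff : ∀ x : ℝ, DifferentiableOn ℂ
      (fun u => Complex.exp (x*u) * (1 - q * Complex.exp u)⁻¹) (closedBall (0:ℂ) r) :=
    fun x => (((differentiable_const ((x:ℂ))).mul differentiable_id).cexp.differentiableOn).mul hdiffh
  have rep : ∀ x : ℝ, c x = (2 * ↑Real.pi * I : ℂ)⁻¹ •
      ∮ u in C(0, (r:ℝ)), u⁻¹ ^ (k-1) • u⁻¹ • (Complex.exp (x*u) * (1 - q * Complex.exp u)⁻¹) :=
    fun x => coeff_eq hr (gdiff x) (k-1)
  have hγ0 : ∀ θ : ℝ, circleMap 0 (r:ℝ) θ ≠ 0 := fun θ => circleMap_ne_center (by positivity)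
  have hmem : ∀ θ : ℝ, circleMap 0 (r:ℝ) θ ∈ closedBall (0:ℂ) (r:ℝ) := by
    intro θ; simp [Metric.mem_closedBall, Complex.dist_eq, norm_circleMap_zero]
  have hccont : Continuous c := by
    have hc2 : c = fun x : ℝ => (2 * ↑Real.pi * I : ℂ)⁻¹ *
        ∫ θ in (0:ℝ)..(2*Real.pi), (circleMap 0 (r:ℝ) θ * I) *
          ((circleMap 0 (r:ℝ) θ)⁻¹ ^ (k-1) * ((circleMap 0 (r:ℝ) θ)⁻¹ *
            (Complex.exp (x * circleMap 0 (r:ℝ) θ) * (1 - q * Complex.exp (circleMap 0 (r:ℝ) θ))⁻¹))) := by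
      funext x
      rw [rep x]
      unfold circleIntegral
      simp only [deriv_circleMap, smul_eq_mul]
    rw [hc2]
    apply Continuous.mul continuous_const
    apply intervalIntegral.continuous_parametric_intervalIntegral_of_continuous'
    show Continuous fun p : ℝ × ℝ => (circleMap 0 (r:ℝ) p.2 * I) *
          ((circleMap 0 (r:ℝ) p.2)⁻¹ ^ (k-1) * ((circleMap 0 (r:ℝ) p.2)⁻¹ *
            (Complex.exp (p.1 * circleMap 0 (r:ℝ) p.2) * (1 - q * Complex.exp (circleMap 0 (r:ℝ) p.2))⁻¹)))
    have hγ : Continuous fun p : ℝ×ℝ => circleMap 0 (r:ℝ) p.2 :=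
      (continuous_circleMap 0 (r:ℝ)).comp continuous_snd
    have h2 : Continuous fun p : ℝ×ℝ => (circleMap 0 (r:ℝ) p.2)⁻¹ := hγ.inv₀ (fun p => hγ0 p.2)
    have h3 : Continuous fun p : ℝ×ℝ => Complex.exp (↑p.1 * circleMap 0 (r:ℝ) p.2) :=
      ((Complex.continuous_ofReal.comp continuous_fst).mul hγ).cexp
    have h4 : Continuous fun p : ℝ×ℝ => (1 - q * Complex.exp (circleMap 0 (r:ℝ) p.2))⁻¹ :=
      (continuous_const.sub (continuous_const.mul hγ.cexp)).inv₀ (fun p => hball _ (hmem p.2))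
    exact (hγ.mul continuous_const).mul ((h2.pow (k-1)).mul (h2.mul (h3.mul h4)))
  have hc0 : c 0 = iteratedDeriv (k-1) (fun u => (1 - q * Complex.exp u)⁻¹) 0
      / ((k-1).factorial : ℂ) := by
    rw [hcdef]
    norm_num
  have hnbhd : closedBall (0:ℂ) r ∈ nhds (0:ℂ) := closedBall_mem_nhds 0 (by positivity)
  have heq2 : (fun u : ℂ => q * (Complex.exp (((1:ℝ):ℂ)*u) * (1 - q * Complex.exp u)⁻¹))
      =ᶠ[nhds (0:ℂ)] fun u => (1 - q * Complex.exp u)⁻¹ - 1 := by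
    filter_upwards [hnbhd] with u hu
    have hD := hball u hu
    push_cast
    rw [one_mul]
    field_simp
    ring
  have hqc : c 0 = q * c 1 := by
    have e1 : q * c 1 = iteratedDeriv (k-1)
        (fun u => q * (Complex.exp (((1:ℝ):ℂ)*u) * (1 - q * Complex.exp u)⁻¹)) 0
        / ((k-1).factorial : ℂ) := by
      rw [hcdef]
      simp only [iteratedDeriv_cmul]
      ring
    rw [hc0, e1, Filter.EventuallyEq.iteratedDeriv_eq (k-1) heq2]
    have hk1 : k - 1 = (k-2)+1 := by omega
    rw [hk1, iteratedDeriv_succ', iteratedDeriv_succ']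
    congr 2
    funext u
    exact (deriv_sub_const 1).symm
  set f₀ : ℝ → ℂ := fun x => Complex.exp (-(2 * (Real.pi:ℂ) * I) * z * x) * c x with hf0def
  have hf01 : f₀ 0 = f₀ (0+1) := by
    rw [hf0def]
    simp only [Complex.ofReal_zero, Complex.ofReal_one, mul_zero, mul_one, Complex.exp_zero,
      one_mul, zero_add, ← hqdef]
    exact hqc
  have hf0cont : Continuous f₀ :=
    ((continuous_const.mul Complex.continuous_ofReal).cexp).mul hccont
  set F : C(AddCircle 1, ℂ) := ⟨AddCircle.liftIco 1 0 f₀,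
    AddCircle.liftIco_continuous hf01 hf0cont.continuousOn⟩ with hFdef
  have hFcoeff : ∀ n : ℤ, fourierCoeff (⇑F) n = 1 / (2*(Real.pi:ℂ)*I*((n:ℂ)+z))^k := by
    intro n
    set w : ℂ := -(2 * (Real.pi:ℂ) * I * ((n:ℂ)+z)) with hwdef
    have hnz : ((n:ℂ) + z) ≠ 0 := by
      intro h
      apply hz (-n)
      push_cast
      linear_combination h
    have hw : w ≠ 0 := by
      rw [hwdef, neg_ne_zero]
      exact mul_ne_zero Complex.two_pi_I_ne_zero hnz
    have hwpos : 0 < ‖w‖ := norm_pos_iff.mpr hw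
    have hexpw : Complex.exp w = q := by
      rw [hwdef, show -(2 * (Real.pi:ℂ) * I * ((n:ℂ)+z))
          = ((-n : ℤ):ℂ) * (2*(Real.pi:ℂ)*I) + (-(2 * (Real.pi:ℂ) * I) * z) by push_cast; ring,
        Complex.exp_add, Complex.exp_int_mul_two_pi_mul_I, one_mul, hqdef]
    set ρ : NNReal := min r (Real.toNNReal (‖w‖ / 2)) with hρdef
    have hρ : 0 < ρ := lt_min hr (Real.toNNReal_pos.mpr (by positivity))
    have hρr : (ρ:ℝ) ≤ (r:ℝ) := by exact_mod_cast min_le_left _ _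
    have hρw : (ρ:ℝ) < ‖w‖ := by
      have hmin : (ρ:ℝ) ≤ ((Real.toNNReal (‖w‖ / 2)):ℝ) := by
        exact_mod_cast min_le_right _ _
      rw [Real.coe_toNNReal _ (by positivity)] at hmin
      linarith
    have hball' : ∀ u : ℂ, u ∈ closedBall (0:ℂ) ρ → 1 - q * Complex.exp u ≠ 0 :=
      fun u hu => hball u (closedBall_subset_closedBall hρr hu)
    have hK := key k hk q w hq1 hw hexpw ρ hρ hρw hball'
    rw [hFdef]
    rw [ContinuousMap.coe_mk]
    rw [fourierCoeff_liftIco_eq]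
    rw [fourierCoeffOn_eq_integral]
    simp only [zero_add, sub_zero, div_one, one_smul, smul_eq_mul, fourier_coe_apply,
      Int.cast_neg, Complex.ofReal_one]
    have hcong : ∀ x ∈ Set.uIcc (0:ℝ) 1,
        Complex.exp (2 * (Real.pi:ℂ) * I * (-(n:ℂ)) * (x:ℂ)) * f₀ x
        = Complex.exp (w * x) * c x := by
      intro x _
      rw [hf0def]
      simp only []
      rw [← mul_assoc, ← Complex.exp_add]
      congr 2
      rw [hwdef]
      ring
    rw [intervalIntegral.integral_congr hcong]
    have hKc : (∫ x in (0:ℝ)..1, Complex.exp (w * x) * c x) = 1/(-w)^k := by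
      rw [hcdef]; exact hK
    rw [hKc, hwdef, neg_neg]
  have hsum2 : Summable (fourierCoeff (⇑F)) := by
    have hfe : fourierCoeff (⇑F) = fun n : ℤ => 1 / (2*(Real.pi:ℂ)*I*((n:ℂ)+z))^k :=
      funext hFcoeff
    rw [hfe]
    exact sum_aux k hk z
  have H := has_pointwise_sum_fourier_series_of_summable hsum2 ((t : ℝ) : AddCircle (1:ℝ))
  have hFt : F ((t : ℝ) : AddCircle (1:ℝ)) = f₀ t := by
    rw [hFdef]
    rw [ContinuousMap.coe_mk]
    exact AddCircle.liftIco_coe_apply (Set.mem_Ico.mpr ⟨h0.le, by linarith⟩)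
  rw [hFt] at H
  have hterm : ∀ n : ℤ, fourierCoeff (⇑F) n • fourier n (((t:ℝ)) : AddCircle (1:ℝ))
      = Complex.exp (2 * (Real.pi:ℂ) * I * (n:ℂ) * (t:ℂ)) / (2 * (Real.pi:ℂ) * I * ((n:ℂ)+z))^k := by
    intro n
    rw [hFcoeff n, fourier_coe_apply, smul_eq_mul]
    rw [one_div_mul_eq_div]
    congr 1
    norm_num
  simp only [hterm] at H
  refine ⟨H.summable, ?_⟩
  have hfuneq : (fun u : ℂ => Complex.exp ((t:ℂ)*u) * (1 - q * Complex.exp u)⁻¹)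
      = fun u : ℂ => Complex.exp ((t:ℂ)*u) / (1 - Complex.exp (-(2 * (Real.pi:ℂ) * I) * z + u)) := by
    funext u
    rw [div_eq_mul_inv, Complex.exp_add, ← hqdef]
  rw [H.tsum_eq]
  show Complex.exp (-(2 * (Real.pi:ℂ) * I) * z * t) * c t = _
  rw [hcdef]
  simp only [← hfuneq]
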